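/- arXiv:1002.4388 — 2 statements merged into one kernel-verified Lean document; each statement's English description precedes it below -/
import Mathlib

section
/- (Equiprobable qubit states and the minimal enclosing ball.) Let m ≥ 1 and let (ρ_x)_{x∈X}, |X| = m, be a discrimination problem on ℂ² in which each weighted state has trace 1/m, i.e. ρ_x = M(1/m, r_x) is positive semidefinite with r_x ∈ ℝ³. Then the maximal guessing probability equals P_guess = 1/m + inf_{s∈ℝ³} max_{x∈X} ‖s − r_x‖, i.e. 1/m plus the radius of the minimal enclosing ball of the points (r_x)_{x∈X}. -/
open scoped ComplexOrder

/-- The Pauli matrices. -/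
noncomputable def pauli1 : Matrix (Fin 2) (Fin 2) ℂ := !![0, 1; 1, 0]
noncomputable def pauli2 : Matrix (Fin 2) (Fin 2) ℂ := !![0, -Complex.I; Complex.I, 0]
noncomputable def pauli3 : Matrix (Fin 2) (Fin 2) ℂ := !![1, 0; 0, -1]

/-- The Bloch representation `M(p, r) = (1/2)(p·I + r₁σ₁ + r₂σ₂ + r₃σ₃)` for `r ∈ ℝ³`. -/
noncomputable def blochMat (p : ℝ) (r : EuclideanSpace ℝ (Fin 3)) :
    Matrix (Fin 2) (Fin 2) ℂ :=
  (1/2 : ℂ) • ((p : ℂ) • (1 : Matrix (Fin 2) (Fin 2) ℂ)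
    + (r 0 : ℂ) • pauli1 + (r 1 : ℂ) • pauli2 + (r 2 : ℂ) • pauli3)

open scoped RealInnerProductSpace

section Aux

lemma blochMat_eq (p : ℝ) (s : EuclideanSpace ℝ (Fin 3)) :
    blochMat p s = !![((p:ℂ) + (s 2:ℝ))/2, ((s 0:ℝ) - (s 1:ℝ)*Complex.I)/2;
      ((s 0:ℝ) + (s 1:ℝ)*Complex.I)/2, ((p:ℂ) - (s 2:ℝ))/2] := by
  unfold blochMat pauli1 pauli2 pauli3
  ext i j
  fin_cases i <;> fin_cases j <;>
    simp [Matrix.one_fin_two] <;> ring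

lemma blochMat_zero : blochMat 0 0 = 0 := by
  rw [blochMat_eq]; ext i j; fin_cases i <;> fin_cases j <;> simp

lemma blochMat_two : blochMat 2 0 = 1 := by
  rw [blochMat_eq]; ext i j; fin_cases i <;> fin_cases j <;>
    simp [Matrix.one_fin_two]

lemma blochMat_add (p q : ℝ) (s t : EuclideanSpace ℝ (Fin 3)) :
    blochMat p s + blochMat q t = blochMat (p+q) (s+t) := by
  rw [blochMat_eq, blochMat_eq, blochMat_eq]
  have h0 : (s+t) 0 = s 0 + t 0 := rfl
  have h1 : (s+t) 1 = s 1 + t 1 := rfl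
  have h2 : (s+t) 2 = s 2 + t 2 := rfl
  ext i j; fin_cases i <;> fin_cases j <;>
    simp [h0, h1, h2] <;> push_cast <;> ring

lemma blochMat_sum {X : Type*} (S : Finset X) (p : X → ℝ) (s : X → EuclideanSpace ℝ (Fin 3)) :
    ∑ x ∈ S, blochMat (p x) (s x) = blochMat (∑ x ∈ S, p x) (∑ x ∈ S, s x) := by
  induction S using Finset.cons_induction with
  | empty => simpa using blochMat_zero.symm
  | cons a S ha ih =>
      rw [Finset.sum_cons, Finset.sum_cons, Finset.sum_cons, ih, blochMat_add]

lemma trace_blochMat_mul (p q : ℝ) (s t : EuclideanSpace ℝ (Fin 3)) :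
    ((blochMat p s * blochMat q t).trace).re
      = (p*q + (s 0)*(t 0) + (s 1)*(t 1) + (s 2)*(t 2))/2 := by
  rw [blochMat_eq, blochMat_eq]
  simp [Matrix.trace_fin_two, Matrix.mul_apply, Fin.sum_univ_two, Complex.add_re,
    Complex.mul_re, Complex.div_re, Complex.div_im, Complex.normSq]
  ring

lemma re_trace_blochMat_mul (p q : ℝ) (s t : EuclideanSpace ℝ (Fin 3)) :
    ((blochMat p s * blochMat q t).trace).re = (p*q + ⟪s, t⟫)/2 := by
  rw [trace_blochMat_mul]
  have h : ⟪s, t⟫ = s 0 * t 0 + s 1 * t 1 + s 2 * t 2 := by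
    simp [PiLp.inner_apply, Fin.sum_univ_three, RCLike.inner_apply]; ring
  rw [h]
  ring

lemma norm_sq_eq3 (s : EuclideanSpace ℝ (Fin 3)) :
    ‖s‖^2 = (s 0)^2 + (s 1)^2 + (s 2)^2 := by
  rw [← real_inner_self_eq_norm_sq]
  simp only [PiLp.inner_apply, Fin.sum_univ_three, RCLike.inner_apply, conj_trivial]
  ring

lemma quad_abs (p s0 s1 s2 A B X Y : ℝ) (hp : 0 ≤ p) (hs : s0^2+s1^2+s2^2 ≤ p^2)
    (hXY : X^2+Y^2 = A*B) (hA : 0 ≤ A) (hB : 0 ≤ B) :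
    0 ≤ p*(A+B) + s2*(A-B) + 2*s0*X + 2*s1*Y := by
  have hAB : 0 ≤ A + B := by linarith
  have hCS : (s2*(A-B) + 2*s0*X + 2*s1*Y)^2
      ≤ (s0^2+s1^2+s2^2) * ((A-B)^2 + 4*X^2 + 4*Y^2) := by
    nlinarith [sq_nonneg (s2*(2*X) - s0*(A-B)), sq_nonneg (s2*(2*Y) - s1*(A-B)),
      sq_nonneg (s0*(2*Y) - s1*(2*X))]
  have hid : (A-B)^2 + 4*X^2 + 4*Y^2 = (A+B)^2 := by linear_combination 4*hXY
  have h2 : (s2*(A-B)+2*s0*X+2*s1*Y)^2 ≤ (p*(A+B))^2 := by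
    rw [hid] at hCS
    calc (s2*(A-B)+2*s0*X+2*s1*Y)^2 ≤ (s0^2+s1^2+s2^2) * (A+B)^2 := hCS
    _ ≤ p^2 * (A+B)^2 := by nlinarith [sq_nonneg (A+B)]
    _ = (p*(A+B))^2 := by ring
  nlinarith [h2, mul_nonneg hp hAB, sq_nonneg (s2*(A-B)+2*s0*X+2*s1*Y + p*(A+B))]

lemma quadform_key (p s0 s1 s2 ar ai br bi : ℝ)
    (hp : 0 ≤ p) (hs : s0^2+s1^2+s2^2 ≤ p^2) :
    0 ≤ p*(ar^2+ai^2+br^2+bi^2) + s2*(ar^2+ai^2-br^2-bi^2)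
       + 2*s0*(ar*br+ai*bi) + 2*s1*(ar*bi-ai*br) := by
  have := quad_abs p s0 s1 s2 (ar^2+ai^2) (br^2+bi^2) (ar*br+ai*bi) (ar*bi-ai*br)
    hp hs (by ring) (by positivity) (by positivity)
  linarith

lemma posSemidef_blochMat {p : ℝ} {s : EuclideanSpace ℝ (Fin 3)} (hp : 0 ≤ p)
    (h : ‖s‖ ≤ p) : (blochMat p s).PosSemidef := by
  have hs2 : (s 0)^2 + (s 1)^2 + (s 2)^2 ≤ p^2 := by
    rw [← norm_sq_eq3]
    exact pow_le_pow_left₀ (norm_nonneg s) h 2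
  refine Matrix.PosSemidef.of_dotProduct_mulVec_nonneg ?_ ?_
  · rw [blochMat_eq]
    ext i j
    fin_cases i <;> fin_cases j <;>
      simp [Matrix.conjTranspose_apply, Complex.ext_iff] <;> ring
  · intro v
    rw [Complex.le_def]
    rw [blochMat_eq]
    have key := quadform_key p (s 0) (s 1) (s 2) (v 0).re (v 0).im (v 1).re (v 1).im hp hs2
    constructor
    · simp [dotProduct, Matrix.mulVec, Fin.sum_univ_two, Complex.add_re, Complex.mul_re,
        Complex.div_re, Complex.div_im, Complex.normSq_apply, Complex.add_im, Complex.mul_im]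
      ring_nf
      ring_nf at key
      linarith [key]
    · simp [dotProduct, Matrix.mulVec, Fin.sum_univ_two, Complex.add_re, Complex.mul_re,
        Complex.div_re, Complex.div_im, Complex.normSq_apply, Complex.add_im, Complex.mul_im]
      ring

lemma blochMat_bounds_of_posSemidef {p : ℝ} {s : EuclideanSpace ℝ (Fin 3)}
    (hps : (blochMat p s).PosSemidef) : 0 ≤ p ∧ ‖s‖ ≤ p := by
  rw [blochMat_eq] at hps
  have hn : 0 ≤ ‖s‖ := norm_nonneg s
  have hnn : ‖s‖^2 = (s 0)^2 + (s 1)^2 + (s 2)^2 := norm_sq_eq3 s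
  have h0 := (Complex.le_def.mp (hps.dotProduct_mulVec_nonneg ![1,0])).1
  have h1 := (Complex.le_def.mp (hps.dotProduct_mulVec_nonneg ![0,1])).1
  have hv := (Complex.le_def.mp
    (hps.dotProduct_mulVec_nonneg ![-((s 0 : ℝ) - (s 1:ℝ)*Complex.I), ((‖s‖ + s 2 : ℝ):ℂ)])).1
  simp [dotProduct, Matrix.mulVec, Fin.sum_univ_two, Complex.add_re, Complex.mul_re,
    Complex.div_re, Complex.div_im, Complex.normSq_apply, Complex.add_im, Complex.mul_im,
    Complex.sub_re, Complex.sub_im, Complex.neg_re, Complex.neg_im] at h0 h1 hv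
  ring_nf at h0 h1 hv
  have e2 : p * s 2 * ‖s‖ + p * s 2 ^ 2 * (1 / 2) + p * s 0 ^ 2 * (1 / 2) + p * ‖s‖ ^ 2 * (1 / 2)
        + p * s 1 ^ 2 * (1 / 2) + s 2 * s 0 ^ 2 * (-1 / 2) + s 2 * ‖s‖ ^ 2 * (-1 / 2)
        + (s 2 * s 1 ^ 2 * (-1 / 2) - s 2 ^ 2 * ‖s‖) + s 2 ^ 3 * (-1 / 2)
        + (-(s 0 ^ 2 * ‖s‖) - ‖s‖ * s 1 ^ 2)
      = (p - ‖s‖) * (‖s‖ * (‖s‖ + s 2)) := by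
    linear_combination (‖s‖ - (p - s 2)/2) * hnn
  replace hv : 0 ≤ (p - ‖s‖) * (‖s‖ * (‖s‖ + s 2)) := by linarith [e2, hv]
  have hp : 0 ≤ p := by linarith
  refine ⟨hp, ?_⟩
  have hns : 0 ≤ ‖s‖ + s 2 := by nlinarith [sq_nonneg (s 0), sq_nonneg (s 1)]
  rcases eq_or_lt_of_le hns with heq | hlt
  · linarith
  · rcases eq_or_lt_of_le hn with hn0 | hnpos
    · linarith
    · nlinarith [mul_pos hnpos hlt]

lemma exists_blochMat_of_posSemidef {E : Matrix (Fin 2) (Fin 2) ℂ} (h : E.PosSemidef) :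
    ∃ p s, E = blochMat p s ∧ 0 ≤ p ∧ ‖s‖ ≤ p := by
  have h00 := h.1.apply 0 0
  have h11 := h.1.apply 1 1
  have h10 := h.1.apply 1 0
  have heq : E = blochMat ((E 0 0).re + (E 1 1).re)
      !₂[2*(E 0 1).re, -2*(E 0 1).im, (E 0 0).re - (E 1 1).re] := by
    rw [blochMat_eq]
    have him00 : (E 0 0).im = 0 := by
      have := congrArg Complex.im h00
      simp at this
      linarith
    have him11 : (E 1 1).im = 0 := by
      have := congrArg Complex.im h11
      simp at this
      linarith
    ext i j
    fin_cases i <;> fin_cases j <;>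
      simp [Complex.ext_iff, him00, him11, ← h10] <;> ring
  refine ⟨_, _, heq, blochMat_bounds_of_posSemidef (heq ▸ h)⟩

lemma blochMat_inj {p q : ℝ} {s t : EuclideanSpace ℝ (Fin 3)}
    (h : blochMat p s = blochMat q t) : p = q ∧ s = t := by
  rw [blochMat_eq, blochMat_eq] at h
  have h00 := congrFun (congrFun h 0) 0
  have h01 := congrFun (congrFun h 0) 1
  have h11 := congrFun (congrFun h 1) 1
  simp [Complex.ext_iff] at h00 h01 h11
  obtain ⟨hc, hd⟩ := h01
  have hp : p = q := by linarith
  refine ⟨hp, PiLp.ext fun i => ?_⟩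
  fin_cases i
  · show s 0 = t 0; linarith
  · show s 1 = t 1; linarith
  · show s 2 = t 2; linarith

variable {X : Type*} [Fintype X] [Nonempty X]

lemma exists_min_enclosing (r : X → EuclideanSpace ℝ (Fin 3)) :
    ∃ sstar : EuclideanSpace ℝ (Fin 3), ∀ s : EuclideanSpace ℝ (Fin 3),
      Finset.univ.sup' Finset.univ_nonempty (fun x => ‖sstar - r x‖)
        ≤ Finset.univ.sup' Finset.univ_nonempty (fun x => ‖s - r x‖) := by
  classical
  set f : EuclideanSpace ℝ (Fin 3) → ℝ :=
    fun s => Finset.univ.sup' Finset.univ_nonempty (fun x => ‖s - r x‖) with hf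
  have hcont : Continuous f := by
    apply Continuous.finset_sup'_apply Finset.univ_nonempty
    intro i _
    fun_prop
  obtain ⟨x₀⟩ := ‹Nonempty X›
  set C := f 0 with hC
  have hK : IsCompact (Metric.closedBall (0 : EuclideanSpace ℝ (Fin 3)) (2*C+1)) :=
    isCompact_closedBall _ _
  have hfle : ∀ s x, ‖s - r x‖ ≤ f s := fun s x =>
    Finset.le_sup' (fun x => ‖s - r x‖) (Finset.mem_univ x)
  have hC0 : 0 ≤ C := le_trans (norm_nonneg _) (hfle 0 x₀)
  have h0K : (0 : EuclideanSpace ℝ (Fin 3))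
      ∈ Metric.closedBall (0:EuclideanSpace ℝ (Fin 3)) (2*C+1) :=
    Metric.mem_closedBall_self (by linarith)
  obtain ⟨sstar, hsK, hmin⟩ := hK.exists_isMinOn ⟨0, h0K⟩ hcont.continuousOn
  refine ⟨sstar, fun s => ?_⟩
  by_cases hs : s ∈ Metric.closedBall (0 : EuclideanSpace ℝ (Fin 3)) (2*C+1)
  · exact hmin hs
  · have hs' : 2*C+1 < ‖s‖ := by
      simpa [Metric.mem_closedBall, dist_zero_right] using hs
    have h1 : ‖r x₀‖ ≤ C := by
      have := hfle 0 x₀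
      simpa using this
    have h2 : ‖s‖ - ‖r x₀‖ ≤ ‖s - r x₀‖ := by
      have := norm_sub_norm_le s (r x₀)
      linarith [le_abs_self (‖s‖ - ‖r x₀‖)]
    have h3 : C < f s := by
      have := hfle s x₀
      linarith
    calc f sstar ≤ f 0 := hmin h0K
    _ ≤ f s := by linarith

lemma kkt_min_enclosing (r : X → EuclideanSpace ℝ (Fin 3))
    (sstar : EuclideanSpace ℝ (Fin 3)) (R : ℝ) (hR : 0 < R)
    (hle : ∀ x, ‖sstar - r x‖ ≤ R)
    (hmin : ∀ s : EuclideanSpace ℝ (Fin 3),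
      R ≤ Finset.univ.sup' Finset.univ_nonempty (fun x => ‖s - r x‖)) :
    ∃ lam : X → ℝ, (∀ x, 0 ≤ lam x) ∧ (∑ x, lam x) = 1 ∧
      (∑ x, lam x • (r x - sstar)) = 0 ∧ (∀ x, lam x ≠ 0 → ‖sstar - r x‖ = R) := by
  classical
  set T : Finset X := Finset.univ.filter (fun x => ‖sstar - r x‖ = R) with hT
  set G : X → EuclideanSpace ℝ (Fin 3) := fun x => r x - sstar with hG
  have hTne : T.Nonempty := by
    obtain ⟨x0, -, hx0⟩ := Finset.exists_mem_eq_sup' (Finset.univ_nonempty (α := X))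
      (fun x => ‖sstar - r x‖)
    have h1 : Finset.univ.sup' Finset.univ_nonempty (fun x => ‖sstar - r x‖) ≤ R :=
      Finset.sup'_le _ _ (fun x _ => hle x)
    have h2 := hmin sstar
    rw [hx0] at h1 h2
    exact ⟨x0, Finset.mem_filter.mpr ⟨Finset.mem_univ _, le_antisymm h1 h2⟩⟩
  have h0mem : (0 : EuclideanSpace ℝ (Fin 3))
      ∈ convexHull ℝ ((T.image G : Finset (EuclideanSpace ℝ (Fin 3))) : Set (EuclideanSpace ℝ (Fin 3))) := by
    by_contra hnot
    have hcl : IsClosed (convexHull ℝ ((T.image G : Finset (EuclideanSpace ℝ (Fin 3))) : Set (EuclideanSpace ℝ (Fin 3)))) :=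
      ((T.image G).finite_toSet.isCompact_convexHull ℝ).isClosed
    obtain ⟨φ, u, hu1, hu2⟩ := geometric_hahn_banach_closed_point
      (convex_convexHull ℝ _) hcl hnot
    rw [map_zero] at hu2
    set d : EuclideanSpace ℝ (Fin 3) := (InnerProductSpace.toDual ℝ _).symm φ with hd
    have hdi : ∀ y : EuclideanSpace ℝ (Fin 3), ⟪d, y⟫ = φ y := fun y =>
      InnerProductSpace.toDual_symm_apply
    have hTd : ∀ x ∈ T, -u < ⟪d, sstar - r x⟫ := by
      intro x hx
      have h1 : φ (G x) < u := hu1 _ (subset_convexHull ℝ _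
        (Finset.mem_coe.mpr (Finset.mem_image_of_mem G hx)))
      have h2 : ⟪d, sstar - r x⟫ = - ⟪d, G x⟫ := by
        rw [hG]
        simp only [← inner_neg_right]
        congr 1
        abel
      rw [h2, hdi (G x)]
      linarith
    have hdne : d ≠ 0 := by
      intro h0
      obtain ⟨x, hx⟩ := hTne
      have h1 := hTd x hx
      rw [h0] at h1
      simp only [inner_zero_left] at h1
      linarith
    have hdpos : (0:ℝ) < ‖d‖^2 := by
      have := norm_pos_iff.mpr hdne
      positivity
    have hεev : ∀ x : X, ∀ᶠ ε in nhdsWithin (0:ℝ) (Set.Ioi 0),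
        ‖(sstar - ε • d) - r x‖ < R := by
      intro x
      by_cases hx : x ∈ T
      · have hRx : ‖sstar - r x‖ = R := (Finset.mem_filter.mp hx).2
        have hdx := hTd x hx
        refine Filter.eventually_of_mem (Ioo_mem_nhdsGT_of_mem
          (⟨le_refl 0, div_pos (by linarith) hdpos⟩ : (0:ℝ) ∈ Set.Ico 0 ((-u) / ‖d‖^2))) ?_
        intro ε hε
        obtain ⟨hε0, hεu⟩ := hε
        have hee : (sstar - ε • d) - r x = (sstar - r x) - ε • d := by abel
        have h1 : ‖(sstar - ε • d) - r x‖^2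
            = ‖sstar - r x‖^2 - 2*(ε * ⟪d, sstar - r x⟫) + ε^2*‖d‖^2 := by
          rw [hee, norm_sub_sq_real, real_inner_smul_right, norm_smul]
          rw [real_inner_comm]
          simp [abs_of_nonneg (le_of_lt hε0)]
          ring
        have h2 : ε * ‖d‖^2 < -u := by
          rw [lt_div_iff₀ hdpos] at hεu
          linarith
        have h3 : ‖(sstar - ε • d) - r x‖^2 < R^2 := by
          rw [h1, hRx]
          nlinarith [hdx, hε0]
        nlinarith [norm_nonneg ((sstar - ε • d) - r x), h3, hR]
      · have hlt : ‖sstar - r x‖ < R := by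
          refine lt_of_le_of_ne (hle x) ?_
          intro hcon
          exact hx (Finset.mem_filter.mpr ⟨Finset.mem_univ _, hcon⟩)
        have hcont : Continuous (fun ε : ℝ => ‖(sstar - ε • d) - r x‖) := by fun_prop
        have htend : Filter.Tendsto (fun ε : ℝ => ‖(sstar - ε • d) - r x‖)
            (nhds 0) (nhds ‖sstar - r x‖) := by
          have := hcont.tendsto 0
          simpa using this
        exact (htend.eventually_lt_const hlt).filter_mono nhdsWithin_le_nhds
    obtain ⟨ε, hε⟩ := (Filter.eventually_all.mpr hεev).exists
    have hlt : Finset.univ.sup' Finset.univ_nonempty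
        (fun x => ‖(sstar - ε • d) - r x‖) < R :=
      (Finset.sup'_lt_iff _).mpr (fun x _ => hε x)
    exact absurd (hmin _) (not_le.mpr hlt)
  rw [Finset.mem_convexHull'] at h0mem
  obtain ⟨w, hw0, hw1, hwsum⟩ := h0mem
  have hex : ∀ y : EuclideanSpace ℝ (Fin 3), ∃ x : X,
      (y ∈ T.image G → x ∈ T ∧ G x = y) := by
    intro y
    by_cases hy : y ∈ T.image G
    · obtain ⟨x, hx, hxy⟩ := Finset.mem_image.mp hy
      exact ⟨x, fun _ => ⟨hx, hxy⟩⟩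
    · exact ⟨Classical.arbitrary X, fun h => absurd h hy⟩
  choose F hF using hex
  refine ⟨fun x => ∑ y ∈ (T.image G).filter (fun y => F y = x), w y, ?_, ?_, ?_, ?_⟩
  · intro x
    exact Finset.sum_nonneg (fun y hy => hw0 y (Finset.mem_of_mem_filter y hy))
  · rw [Finset.sum_fiberwise_of_maps_to (fun y _ => Finset.mem_univ (F y)) w]
    exact hw1
  · have key : ∑ x, (∑ y ∈ (T.image G).filter (fun y => F y = x), w y) • (r x - sstar)
        = ∑ y ∈ T.image G, w y • y := by
      rw [← Finset.sum_fiberwise_of_maps_to (fun y _ => Finset.mem_univ (F y))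
        (fun y => w y • y)]
      refine Finset.sum_congr rfl (fun x _ => ?_)
      rw [Finset.sum_smul]
      refine Finset.sum_congr rfl (fun y hy => ?_)
      obtain ⟨hy1, hy2⟩ := Finset.mem_filter.mp hy
      have h3 : G x = y := by rw [← hy2]; exact (hF y hy1).2
      rw [← h3, hG]
    rw [key, hwsum]
  · intro x hx
    by_contra hxT
    apply hx
    refine Finset.sum_eq_zero (fun y hy => ?_)
    exfalso
    obtain ⟨hy1, hy2⟩ := Finset.mem_filter.mp hy
    have h4 := (hF y hy1).1
    rw [hy2] at h4
    exact hxT (Finset.mem_filter.mp h4).2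

end Aux

/-- Equiprobable qubit states and the minimal enclosing ball: if each of the `m` weighted
states is `ρ x = M(1/m, r x)`, then
`P_guess = 1/m + inf_{s ∈ ℝ³} max_{x} ‖s - r x‖`. -/
theorem qsd_equiprobable_minimal_enclosing_ball {X : Type*} [Fintype X] [Nonempty X]
    (m : ℕ) (hm : 1 ≤ m) (hcard : Fintype.card X = m)
    (r : X → EuclideanSpace ℝ (Fin 3))
    (ρ : X → Matrix (Fin 2) (Fin 2) ℂ)
    (hρdef : ∀ x, ρ x = blochMat (1 / (m : ℝ)) (r x))
    (hρ : ∀ x, (ρ x).PosSemidef)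
    (hρtr : (∑ x, (ρ x).trace) = 1) :
    sSup {p : ℝ | ∃ E : X → Matrix (Fin 2) (Fin 2) ℂ,
        (∀ x, (E x).PosSemidef) ∧ (∑ x, E x) = 1 ∧
        p = ∑ x, ((E x * ρ x).trace).re}
      = 1 / (m : ℝ)
        + ⨅ s : EuclideanSpace ℝ (Fin 3), Finset.univ.sup' Finset.univ_nonempty
            (fun x => ‖s - r x‖) := by
  classical
  obtain ⟨sstar, hglobal⟩ := exists_min_enclosing r
  set f : EuclideanSpace ℝ (Fin 3) → ℝ :=
    fun s => Finset.univ.sup' Finset.univ_nonempty (fun x => ‖s - r x‖) with hf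
  obtain ⟨x₀⟩ := ‹Nonempty X›
  have hfle : ∀ s x, ‖s - r x‖ ≤ f s := fun s x =>
    Finset.le_sup' (fun x => ‖s - r x‖) (Finset.mem_univ x)
  have hf0 : ∀ s, 0 ≤ f s := fun s => le_trans (norm_nonneg _) (hfle s x₀)
  set R := f sstar with hRdef
  have hIeq : (⨅ s, f s) = R := by
    refine le_antisymm (ciInf_le ⟨0, ?_⟩ sstar) (le_ciInf hglobal)
    rintro y ⟨s, rfl⟩
    exact hf0 s
  have hm0 : (0:ℝ) < (m:ℝ) := by
    have : 0 < m := lt_of_lt_of_le Nat.zero_lt_one hm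
    exact_mod_cast this
  -- Upper bound
  have hub : ∀ p ∈ {p : ℝ | ∃ E : X → Matrix (Fin 2) (Fin 2) ℂ,
      (∀ x, (E x).PosSemidef) ∧ (∑ x, E x) = 1 ∧
      p = ∑ x, ((E x * ρ x).trace).re}, p ≤ 1 / (m:ℝ) + R := by
    rintro p ⟨E, hEpsd, hEsum, rfl⟩
    choose P S hPS hP hS using fun x => exists_blochMat_of_posSemidef (hEpsd x)
    have hsum : blochMat (∑ x, P x) (∑ x, S x) = blochMat 2 0 := by
      calc blochMat (∑ x, P x) (∑ x, S x)
          = ∑ x, blochMat (P x) (S x) := (blochMat_sum _ _ _).symm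
      _ = ∑ x, E x := Finset.sum_congr rfl (fun x _ => (hPS x).symm)
      _ = 1 := hEsum
      _ = blochMat 2 0 := blochMat_two.symm
    obtain ⟨hPsum, hSsum⟩ := blochMat_inj hsum
    have hval : ∑ x, ((E x * ρ x).trace).re
        = ∑ x, (P x * (1/(m:ℝ)) + ⟪S x, r x⟫)/2 := by
      refine Finset.sum_congr rfl (fun x _ => ?_)
      rw [hPS x, hρdef x, re_trace_blochMat_mul]
    rw [hval]
    have e0 : ∑ x, ⟪S x, sstar⟫ = 0 := by
      rw [← sum_inner, hSsum, inner_zero_left]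
    have e1 : ∑ x, ⟪S x, r x⟫ = ∑ x, ⟪S x, r x - sstar⟫ + ∑ x, ⟪S x, sstar⟫ := by
      rw [← Finset.sum_add_distrib]
      refine Finset.sum_congr rfl (fun x _ => ?_)
      rw [← inner_add_right]
      congr 1
      abel
    have e2 : ∀ x, ⟪S x, r x - sstar⟫ ≤ P x * R := by
      intro x
      calc ⟪S x, r x - sstar⟫ ≤ ‖S x‖ * ‖r x - sstar‖ := real_inner_le_norm _ _
      _ ≤ P x * R := by
          have h1 : ‖r x - sstar‖ = ‖sstar - r x‖ := norm_sub_rev _ _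
          exact mul_le_mul (hS x) (by rw [h1]; exact hfle sstar x) (norm_nonneg _) (hP x)
    have key : ∑ x, ⟪S x, r x⟫ ≤ 2 * R := by
      calc ∑ x, ⟪S x, r x⟫
          = ∑ x, ⟪S x, r x - sstar⟫ + ∑ x, ⟪S x, sstar⟫ := e1
      _ ≤ (∑ x, P x * R) + 0 :=
          add_le_add (Finset.sum_le_sum (fun x _ => e2 x)) (le_of_eq e0)
      _ = 2 * R := by rw [add_zero, ← Finset.sum_mul, hPsum]
    have esplit : ∑ x, (P x * (1/(m:ℝ)) + ⟪S x, r x⟫)/2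
        = ((∑ x, P x) * (1/(m:ℝ)) + ∑ x, ⟪S x, r x⟫)/2 := by
      rw [← Finset.sum_div, Finset.sum_add_distrib, ← Finset.sum_mul]
    rw [esplit, hPsum]
    rw [div_le_iff₀ (by norm_num : (0:ℝ) < 2)]
    have : 2 * (1/(m:ℝ)) ≤ 2 * (1/(m:ℝ)) := le_refl _
    linarith [key]
  -- Lower bound: explicit optimal POVM
  have hlow : ∃ lam : X → ℝ, ∃ t : X → EuclideanSpace ℝ (Fin 3),
      (∀ x, 0 ≤ lam x) ∧ (∑ x, lam x) = 1 ∧ (∀ x, ‖t x‖ ≤ 2 * lam x) ∧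
      (∑ x, t x) = 0 ∧ (∑ x, ⟪t x, r x⟫) = 2 * R := by
    rcases (hf0 sstar).eq_or_lt with hR0 | hRpos
    · refine ⟨fun _ => (Fintype.card X : ℝ)⁻¹, fun _ => 0, ?_, ?_, ?_, ?_, ?_⟩
      · intro x; positivity
      · rw [Finset.sum_const, Finset.card_univ, nsmul_eq_mul]
        have hc : (Fintype.card X : ℝ) ≠ 0 := Nat.cast_ne_zero.mpr Fintype.card_ne_zero
        field_simp
      · intro x
        simp only [norm_zero]
        positivity
      · simp
      · have hR0' : R = 0 := hR0.symm
        simp [hR0']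
    · obtain ⟨lam, hl0, hlsum, hlG, hlsupp⟩ :=
        kkt_min_enclosing r sstar R hRpos (fun x => hfle sstar x) hglobal
      set t : X → EuclideanSpace ℝ (Fin 3) :=
        fun x => (2 * lam x / R) • (r x - sstar) with ht
      have htsum : ∑ x, t x = 0 := by
        have hsm : ∀ x, t x = (2/R) • (lam x • (r x - sstar)) := by
          intro x
          rw [ht, smul_smul]
          congr 1
          field_simp
        rw [Finset.sum_congr rfl (fun x _ => hsm x), ← Finset.smul_sum, hlG, smul_zero]
      refine ⟨lam, t, hl0, hlsum, ?_, htsum, ?_⟩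
      · intro x
        rw [ht, norm_smul]
        rcases eq_or_ne (lam x) 0 with h | h
        · simp [h]
        · have hxR : ‖r x - sstar‖ = R := by
            rw [norm_sub_rev]; exact hlsupp x h
          have hlx : 0 < lam x := lt_of_le_of_ne (hl0 x) (Ne.symm h)
          rw [hxR, Real.norm_eq_abs, abs_of_nonneg (by positivity : (0:ℝ) ≤ 2 * lam x / R)]
          rw [div_mul_cancel₀ _ (ne_of_gt hRpos)]
      · have e0 : ∑ x, ⟪t x, sstar⟫ = 0 := by
          rw [← sum_inner, htsum, inner_zero_left]
        have e1 : ∑ x, ⟪t x, r x⟫ = ∑ x, ⟪t x, r x - sstar⟫ + ∑ x, ⟪t x, sstar⟫ := by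
          rw [← Finset.sum_add_distrib]
          refine Finset.sum_congr rfl (fun x _ => ?_)
          rw [← inner_add_right]
          congr 1
          abel
        have e2 : ∀ x, ⟪t x, r x - sstar⟫ = 2 * lam x * R := by
          intro x
          rcases eq_or_ne (lam x) 0 with h | h
          · simp [ht, h]
          · have hxR : ‖r x - sstar‖ = R := by
              rw [norm_sub_rev]; exact hlsupp x h
            rw [ht]
            rw [real_inner_smul_left, real_inner_self_eq_norm_mul_norm, hxR]
            field_simp
        rw [e1, e0, add_zero, Finset.sum_congr rfl (fun x _ => e2 x)]
        have : ∑ x, 2 * lam x * R = 2 * R * ∑ x, lam x := by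
          rw [Finset.mul_sum]
          exact Finset.sum_congr rfl (fun x _ => by ring)
        rw [this, hlsum, mul_one]
  obtain ⟨lam, t, hl0, hlsum, htle, htsum, htval⟩ := hlow
  have hmem : (1/(m:ℝ) + R) ∈ {p : ℝ | ∃ E : X → Matrix (Fin 2) (Fin 2) ℂ,
      (∀ x, (E x).PosSemidef) ∧ (∑ x, E x) = 1 ∧
      p = ∑ x, ((E x * ρ x).trace).re} := by
    refine ⟨fun x => blochMat (2 * lam x) (t x),
      fun x => posSemidef_blochMat (by linarith [hl0 x]) (htle x), ?_, ?_⟩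
    · rw [blochMat_sum]
      have h2 : ∑ x, 2 * lam x = 2 := by
        rw [← Finset.mul_sum, hlsum, mul_one]
      rw [htsum, h2, blochMat_two]
    · have hterm : ∀ x, ((blochMat (2 * lam x) (t x) * ρ x).trace).re
          = (2 * lam x * (1/(m:ℝ)) + ⟪t x, r x⟫)/2 := by
        intro x
        rw [hρdef x, re_trace_blochMat_mul]
      rw [Finset.sum_congr rfl (fun x _ => hterm x)]
      have esplit : ∑ x, (2 * lam x * (1/(m:ℝ)) + ⟪t x, r x⟫)/2
          = ((∑ x, 2 * lam x) * (1/(m:ℝ)) + ∑ x, ⟪t x, r x⟫)/2 := by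
        rw [← Finset.sum_div, Finset.sum_add_distrib, ← Finset.sum_mul]
      have h2 : ∑ x, 2 * lam x = 2 := by
        rw [← Finset.mul_sum, hlsum, mul_one]
      rw [esplit, h2, htval]
      field_simp
  rw [hIeq]
  exact le_antisymm (csSup_le ⟨_, hmem⟩ hub)
    (le_csSup ⟨1/(m:ℝ) + R, hub⟩ hmem)
end

section
/- (Optimal strategies with at most n² outcomes.) For every discrimination problem (ρ_x)_{x∈X} on ℂ^n there exists an optimal POVM (E_x)_{x∈X} (attaining P_guess) such that the set {x ∈ X : E_x ≠ 0} has at most n² elements. In particular, for qubits (n = 2) there is an optimal POVM with at most 4 nonzero elements. -/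
open scoped ComplexOrder

namespace QSD
variable {n : ℕ} {X : Type*} [Fintype X] [Nonempty X]

attribute [local instance] Matrix.normedAddCommGroup Matrix.normedSpace

set_option linter.unusedSectionVars false

lemma psd_smul_real {A : Matrix (Fin n) (Fin n) ℂ} (hA : A.PosSemidef) {r : ℝ} (hr : 0 ≤ r) :
    (((r : ℂ)) • A).PosSemidef := by
  refine Matrix.PosSemidef.of_dotProduct_mulVec_nonneg ?_ ?_
  · unfold Matrix.IsHermitian
    rw [Matrix.conjTranspose_smul, hA.1]
    congr 1
    simp [Complex.ext_iff]
  · intro x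
    rw [Matrix.smul_mulVec, dotProduct_smul, smul_eq_mul]
    exact mul_nonneg (by exact_mod_cast hr) (hA.dotProduct_mulVec_nonneg x)

lemma psd_diag_nonneg {A : Matrix (Fin n) (Fin n) ℂ} (hA : A.PosSemidef) (i : Fin n) :
    0 ≤ A i i := by
  have := hA.dotProduct_mulVec_nonneg (Pi.single i 1)
  simpa [Matrix.mulVec_single, dotProduct, Pi.single_apply, Finset.sum_ite_eq] using this

lemma psd_entry_bound {A : Matrix (Fin n) (Fin n) ℂ} (hA : A.PosSemidef) (i j : Fin n) :
    2 * ‖A i j‖ ≤ (A i i).re + (A j j).re := by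
  rcases eq_or_ne (A i j) 0 with h | h
  · have hi := psd_diag_nonneg hA i
    have hj := psd_diag_nonneg hA j
    rw [Complex.le_def] at hi hj
    simp only [Complex.zero_re] at hi hj
    simp [h]
    nlinarith [hi.1, hj.1]
  · set a : ℝ := ‖A i j‖ with ha
    have habs : a ≠ 0 := by simpa [ha] using h
    have hapos : 0 < a := lt_of_le_of_ne (norm_nonneg _) (Ne.symm habs)
    set c : ℂ := A i j / a with hc
    have hsq : (starRingEnd ℂ) (A i j) * A i j = (a:ℂ) * a := by
      rw [mul_comm, Complex.mul_conj]
      norm_cast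
      rw [ha, ← Complex.sq_norm]; ring
    have hane : ((a:ℂ)) ≠ 0 := by exact_mod_cast habs
    have hcc : (starRingEnd ℂ) c * A i j = (a : ℂ) := by
      rw [hc, map_div₀, Complex.conj_ofReal, div_mul_eq_mul_div, hsq]
      field_simp
    have hcnorm : (starRingEnd ℂ) c * c = 1 := by
      rw [hc, map_div₀, Complex.conj_ofReal, div_mul_div_comm, hsq,
        div_self (mul_ne_zero hane hane)]
    rcases eq_or_ne i j with rfl | hij
    · have hi := psd_diag_nonneg hA i
      rw [Complex.le_def] at hi
      simp only [Complex.zero_re, Complex.zero_im] at hi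
      have : a = (A i i).re := by
        rw [ha, Complex.norm_def, Complex.normSq_apply, ← hi.2]
        simpa [← sq] using Real.sqrt_sq hi.1
      rw [this]; nlinarith [hi.1]
    · set v : Fin n → ℂ := Pi.single i c + Pi.single j (-1) with hv
      have hq := hA.dotProduct_mulVec_nonneg v
      have hAv : ∀ k, (A.mulVec v) k = A k i * c - A k j := by
        intro k
        simp [hv, Matrix.mulVec_add, Matrix.mulVec_single, sub_eq_add_neg, mul_comm]
      have hstar : star v = Pi.single i ((starRingEnd ℂ) c) + Pi.single j (-1) := by
        funext k
        rcases eq_or_ne k i with rfl | hki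
        · simp [hv, Pi.single_apply, hij.symm, Pi.star_apply]
        · rcases eq_or_ne k j with rfl | hkj
          · simp [hv, Pi.single_apply, hij.symm, hki, Pi.star_apply]
          · simp [hv, Pi.single_apply, hki, hkj, Pi.star_apply]
      have hdot : dotProduct (star v) (A.mulVec v)
          = (A i i - (a:ℂ)) - ((a:ℂ) - A j j) := by
        rw [hstar]
        rw [add_dotProduct, single_dotProduct, single_dotProduct]
        rw [hAv i, hAv j]
        have hji : A j i = (starRingEnd ℂ) (A i j) := by
          have := hA.1
          have h2 : (A.conjTranspose) j i = A j i := by rw [this]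
          simpa [Matrix.conjTranspose_apply] using h2.symm
        rw [hji]
        have h1 : (starRingEnd ℂ) c * (A i i * c - A i j)
            = A i i - (a:ℂ) := by
          rw [mul_sub, hcc]
          have hh : (starRingEnd ℂ) c * (A i i * c) = A i i * ((starRingEnd ℂ) c * c) := by
            ring
          rw [hh, hcnorm, mul_one]
        have h2 : (-1 : ℂ) * ((starRingEnd ℂ) (A i j) * c - A j j)
            = -((a:ℂ) - A j j) := by
          have : (starRingEnd ℂ) (A i j) * c = (a : ℂ) := by
            rw [hc, mul_div_assoc', hsq]
            field_simp
          rw [this]; ring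
        rw [h1, h2]; ring
      rw [hdot] at hq
      rw [Complex.le_def] at hq
      simp only [Complex.zero_re, Complex.sub_re, Complex.ofReal_re] at hq
      linarith [hq.1]


lemma isClosed_psd : IsClosed {A : Matrix (Fin n) (Fin n) ℂ | A.PosSemidef} := by
  have h1 : {A : Matrix (Fin n) (Fin n) ℂ | A.PosSemidef}
      = {A | A.conjTranspose = A} ∩ ⋂ v : Fin n → ℂ,
        {A | 0 ≤ dotProduct (star v) (A.mulVec v)} := by
    ext A
    simp only [Set.mem_setOf_eq, Set.mem_inter_iff, Set.mem_iInter]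
    exact Matrix.posSemidef_iff_dotProduct_mulVec
  rw [h1]
  refine IsClosed.inter ?_ (isClosed_iInter fun v => ?_)
  · exact isClosed_eq (Continuous.matrix_conjTranspose continuous_id) continuous_id
  · have hcont : Continuous fun A : Matrix (Fin n) (Fin n) ℂ =>
        dotProduct (star v) (A.mulVec v) :=
      (continuous_const).dotProduct (continuous_id.matrix_mulVec continuous_const)
    have hcl : IsClosed {z : ℂ | 0 ≤ z} := by
      have : {z : ℂ | 0 ≤ z} = Complex.re ⁻¹' Set.Ici 0 ∩ Complex.im ⁻¹' {0} := by
        ext z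
        simp [Complex.le_def, eq_comm]
      rw [this]
      exact (isClosed_Ici.preimage Complex.continuous_re).inter
        (isClosed_singleton.preimage Complex.continuous_im)
    exact hcl.preimage hcont

lemma povm_entry_bound {F : X → Matrix (Fin n) (Fin n) ℂ}
    (hF : ∀ x, (F x).PosSemidef) (hsum : (∑ x, F x) = 1)
    (x : X) (i j : Fin n) : ‖F x i j‖ ≤ 1 := by
  classical
  have hdiag : ∀ k : Fin n, (F x k k).re ≤ 1 := by
    intro k
    have hzero : ∀ y : X, 0 ≤ (F y k k).re := fun y => by
      have := psd_diag_nonneg (hF y) k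
      rw [Complex.le_def] at this
      simpa using this.1
    have hsum' : (∑ y, (F y k k).re) = 1 := by
      have : (∑ y, F y) k k = (1 : Matrix (Fin n) (Fin n) ℂ) k k := by rw [hsum]
      rw [Matrix.one_apply_eq] at this
      have h2 : (∑ y, F y k k) = 1 := by
        rw [← this]
        simp [Matrix.sum_apply]
      calc (∑ y, (F y k k).re) = (∑ y, F y k k).re := by
            rw [Complex.re_sum]
        _ = 1 := by rw [h2]; simp
    calc (F x k k).re = (∑ y, (F y k k).re) - ∑ y ∈ Finset.univ.erase x, (F y k k).re := by
          rw [← Finset.add_sum_erase _ _ (Finset.mem_univ x)]; ring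
      _ ≤ 1 := by
          rw [hsum']
          have : 0 ≤ ∑ y ∈ Finset.univ.erase x, (F y k k).re :=
            Finset.sum_nonneg fun y _ => hzero y
          linarith
  have := psd_entry_bound (hF x) i j
  have hb : ‖F x i j‖ ≤ 1 := by
    nlinarith [hdiag i, hdiag j]
  simpa using hb

lemma isCompact_povm :
    IsCompact {F : X → Matrix (Fin n) (Fin n) ℂ |
      (∀ x, (F x).PosSemidef) ∧ (∑ x, F x) = 1} := by
  apply Metric.isCompact_iff_isClosed_bounded.mpr
  constructor
  · have heq : {F : X → Matrix (Fin n) (Fin n) ℂ |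
        (∀ x, (F x).PosSemidef) ∧ (∑ x, F x) = 1}
        = (⋂ x : X, {F | F x ∈ {A | A.PosSemidef}}) ∩ {F | (∑ x, F x) = 1} := by
      ext F
      simp only [Set.mem_setOf_eq, Set.mem_inter_iff, Set.mem_iInter]
    rw [heq]
    refine IsClosed.inter (isClosed_iInter fun x => ?_) ?_
    · exact isClosed_psd.preimage (continuous_apply x)
    · exact isClosed_eq (by fun_prop) continuous_const
  · rw [Metric.isBounded_iff_subset_closedBall 0]
    refine ⟨1, fun F hF => ?_⟩
    rw [Metric.mem_closedBall, dist_zero_right]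
    rw [pi_norm_le_iff_of_nonneg zero_le_one]
    intro x
    rw [Matrix.norm_le_iff zero_le_one]
    exact fun i j => povm_entry_bound hF.1 hF.2 x i j

lemma continuous_obj (ρ : X → Matrix (Fin n) (Fin n) ℂ) :
    Continuous fun F : X → Matrix (Fin n) (Fin n) ℂ =>
      ∑ x, ((F x * ρ x).trace).re := by
  refine continuous_finset_sum _ fun x _ => ?_
  exact Complex.continuous_re.comp
    (Continuous.matrix_trace ((continuous_apply x).matrix_mul continuous_const))

lemma povm_nonempty :
    ({F : X → Matrix (Fin n) (Fin n) ℂ |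
      (∀ x, (F x).PosSemidef) ∧ (∑ x, F x) = 1}).Nonempty := by
  classical
  obtain ⟨x0⟩ := (inferInstance : Nonempty X)
  refine ⟨fun x => if x = x0 then 1 else 0, fun x => ?_, ?_⟩
  · by_cases h : x = x0 <;> simp [h, Matrix.PosSemidef.one, Matrix.PosSemidef.zero]
  · simp [Finset.sum_ite_eq']

lemma exists_max (ρ : X → Matrix (Fin n) (Fin n) ℂ) :
    ∃ E : X → Matrix (Fin n) (Fin n) ℂ,
      (∀ x, (E x).PosSemidef) ∧ (∑ x, E x) = 1 ∧
      ∀ F : X → Matrix (Fin n) (Fin n) ℂ, (∀ x, (F x).PosSemidef) → (∑ x, F x) = 1 →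
        (∑ x, ((F x * ρ x).trace).re) ≤ ∑ x, ((E x * ρ x).trace).re := by
  obtain ⟨E, hEK, hmax⟩ := isCompact_povm.exists_isMaxOn povm_nonempty
    (continuous_obj ρ).continuousOn
  exact ⟨E, hEK.1, hEK.2, fun F h1 h2 => hmax (Set.mem_setOf_eq ▸ ⟨h1, h2⟩)⟩

section perturb
variable (ρ E : X → Matrix (Fin n) (Fin n) ℂ) (c : X → ℝ) (t : ℝ)

lemma perturb_psd (hE : ∀ x, (E x).PosSemidef) (ht : ∀ x, 0 ≤ 1 - t * c x) (x : X) :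
    ((((1 - t * c x : ℝ) : ℂ)) • E x).PosSemidef :=
  psd_smul_real (hE x) (ht x)

lemma perturb_sum (hsum : (∑ x, E x) = 1) (hc : (∑ x, ((c x : ℂ)) • E x) = 0) :
    (∑ x, (((1 - t * c x : ℝ) : ℂ)) • E x) = 1 := by
  have key : ∀ x : X, (((1 - t * c x : ℝ) : ℂ)) • E x
      = E x - (t : ℂ) • (((c x : ℂ)) • E x) := by
    intro x
    have h1 : (((1 - t * c x : ℝ) : ℂ)) = 1 - (t : ℂ) * ((c x : ℂ)) := by
      push_cast; ring
    rw [h1, sub_smul, one_smul, mul_smul]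
  rw [Finset.sum_congr rfl fun x _ => key x, Finset.sum_sub_distrib, ← Finset.smul_sum, hc,
    smul_zero, sub_zero, hsum]

lemma perturb_obj :
    (∑ x, ((((((1 - t * c x : ℝ) : ℂ)) • E x) * ρ x).trace).re)
      = (∑ x, ((E x * ρ x).trace).re) - t * ∑ x, c x * ((E x * ρ x).trace).re := by
  have key : ∀ x : X, (((((1 - t * c x : ℝ) : ℂ)) • E x * ρ x).trace).re
      = ((E x * ρ x).trace).re - t * (c x * ((E x * ρ x).trace).re) := by
    intro x
    rw [smul_mul_assoc, Matrix.trace_smul, smul_eq_mul, Complex.mul_re]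
    simp only [Complex.ofReal_re, Complex.ofReal_im, zero_mul, sub_zero]
    ring
  rw [Finset.sum_congr rfl fun x _ => key x, Finset.sum_sub_distrib, ← Finset.mul_sum]

end perturb

lemma reduce_step (ρ E : X → Matrix (Fin n) (Fin n) ℂ)
    (hE : ∀ x, (E x).PosSemidef) (hsum : (∑ x, E x) = 1)
    (hopt : ∀ F : X → Matrix (Fin n) (Fin n) ℂ, (∀ x, (F x).PosSemidef) → (∑ x, F x) = 1 →
      (∑ x, ((F x * ρ x).trace).re) ≤ ∑ x, ((E x * ρ x).trace).re)
    (hbig : n ^ 2 < {x : X | E x ≠ 0}.ncard) :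
    ∃ E' : X → Matrix (Fin n) (Fin n) ℂ,
      (∀ x, (E' x).PosSemidef) ∧ (∑ x, E' x) = 1 ∧
      (∑ x, ((E' x * ρ x).trace).re) = (∑ x, ((E x * ρ x).trace).re) ∧
      {x : X | E' x ≠ 0}.ncard < {x : X | E x ≠ 0}.ncard := by
  classical
  set T : Finset X := Finset.univ.filter (fun x => E x ≠ 0) with hT
  have hTS : {x : X | E x ≠ 0}.ncard = T.card := by
    rw [Set.ncard_eq_toFinset_card' _]
    congr 1
    ext x
    simp [hT]
  -- linear dependence
  have hdep : ¬ LinearIndependent ℂ (fun s : {x // x ∈ T} => E s.val) := by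
    intro hli
    have hle := hli.fintype_card_le_finrank
    rw [Fintype.card_coe] at hle
    have hfr : Module.finrank ℂ (Matrix (Fin n) (Fin n) ℂ) = n ^ 2 := by
      rw [Module.finrank_matrix]
      simp [sq]
    rw [hfr] at hle
    omega
  obtain ⟨g, hgsum, i0, hgi0⟩ := Fintype.not_linearIndependent_iff.mp hdep
  set cC : X → ℂ := fun x => if h : x ∈ T then g ⟨x, h⟩ else 0 with hcC
  have hsumC : (∑ x, cC x • E x) = 0 := by
    rw [← Finset.sum_subset (Finset.subset_univ T) (by
      intro x _ hx
      simp [hcC, dif_neg hx])]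
    rw [← Finset.sum_attach T (fun x => cC x • E x)]
    rw [Finset.univ_eq_attach] at hgsum
    rw [← hgsum]
    refine Finset.sum_congr rfl fun s _ => ?_
    simp [hcC, dif_pos s.2]
  have hsuppC : ∀ x, cC x ≠ 0 → E x ≠ 0 := by
    intro x hx
    by_contra h
    apply hx
    have : x ∉ T := by simp [hT, not_not.mpr h]
    simp [hcC, dif_neg this]
  have hx0 : cC (i0 : X) ≠ 0 := by
    simpa [hcC, dif_pos i0.2] using hgi0
  -- conjugate relation
  have hconj : (∑ x, (starRingEnd ℂ) (cC x) • E x) = 0 := by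
    have h := congrArg Matrix.conjTranspose hsumC
    rw [Matrix.conjTranspose_sum] at h
    simpa [Matrix.conjTranspose_smul, (hE _).1.eq] using h
  -- real part relation
  have hre : (∑ x, (((cC x).re : ℂ)) • E x) = 0 := by
    have h2 : (∑ x, ((cC x + (starRingEnd ℂ) (cC x))) • E x) = 0 := by
      rw [Finset.sum_congr rfl fun x _ => add_smul (cC x) ((starRingEnd ℂ) (cC x)) (E x),
        Finset.sum_add_distrib, hsumC, hconj, add_zero]
    have h3 : ∀ x : X, (((cC x).re : ℂ)) • E x
        = (2⁻¹ : ℂ) • ((cC x + (starRingEnd ℂ) (cC x)) • E x) := by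
      intro x
      rw [Complex.add_conj, smul_smul]
      congr 1
      push_cast
      ring
    rw [Finset.sum_congr rfl fun x _ => h3 x, ← Finset.smul_sum, h2, smul_zero]
  -- imaginary part relation
  have him : (∑ x, (((cC x).im : ℂ)) • E x) = 0 := by
    have h2 : (∑ x, ((cC x - (starRingEnd ℂ) (cC x))) • E x) = 0 := by
      rw [Finset.sum_congr rfl fun x _ => sub_smul (cC x) ((starRingEnd ℂ) (cC x)) (E x),
        Finset.sum_sub_distrib, hsumC, hconj, sub_zero]
    have h3 : ∀ x : X, (((cC x).im : ℂ)) • E x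
        = ((2 * Complex.I)⁻¹ : ℂ) • ((cC x - (starRingEnd ℂ) (cC x)) • E x) := by
      intro x
      rw [Complex.sub_conj, smul_smul]
      congr 1
      have h2I : (2 * Complex.I) ≠ 0 := by
        simp [Complex.I_ne_zero]
      field_simp
      push_cast
      ring
    rw [Finset.sum_congr rfl fun x _ => h3 x, ← Finset.smul_sum, h2, smul_zero]
  -- choose a real coefficient vector
  have hmain : ∃ c0 : X → ℝ, (∑ x, ((c0 x : ℂ)) • E x) = 0 ∧
      (∀ x, c0 x ≠ 0 → E x ≠ 0) ∧ (∃ x, c0 x ≠ 0) := by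
    by_cases hre0 : (cC (i0 : X)).re ≠ 0
    · exact ⟨fun x => (cC x).re, hre, fun x hx => hsuppC x (fun h => by simp [h] at hx),
        ⟨i0, hre0⟩⟩
    · push_neg at hre0
      have him0 : (cC (i0 : X)).im ≠ 0 := by
        intro h
        exact hx0 (Complex.ext hre0 h)
      exact ⟨fun x => (cC x).im, him, fun x hx => hsuppC x (fun h => by simp [h] at hx),
        ⟨i0, him0⟩⟩
  obtain ⟨c0, hc0sum, hc0supp, x0', hx0'⟩ := hmain
  -- ensure a positive value
  have hmain2 : ∃ c1 : X → ℝ, (∑ x, ((c1 x : ℂ)) • E x) = 0 ∧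
      (∀ x, c1 x ≠ 0 → E x ≠ 0) ∧ (∃ x, 0 < c1 x) := by
    by_cases hp : ∃ x, 0 < c0 x
    · exact ⟨c0, hc0sum, hc0supp, hp⟩
    · push_neg at hp
      refine ⟨fun x => -c0 x, ?_, ?_, ?_⟩
      · have : ∀ x : X, (((-c0 x : ℝ) : ℂ)) • E x = -(((c0 x : ℂ)) • E x) := by
          intro x
          push_cast
          rw [neg_smul]
        rw [Finset.sum_congr rfl fun x _ => this x, Finset.sum_neg_distrib, hc0sum, neg_zero]
      · intro x hx
        exact hc0supp x (by simpa using hx)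
      · refine ⟨x0', ?_⟩
        have h2 : c0 x0' < 0 := lt_of_le_of_ne (hp x0') hx0'
        show 0 < -c0 x0'
        linarith
  obtain ⟨c1, hc1sum, hc1supp, hc1pos⟩ := hmain2
  -- the linear functional vanishes
  set w : X → ℝ := fun x => ((E x * ρ x).trace).re with hw
  set d : ℝ := ∑ x, c1 x * w x with hd
  have hdzero : d = 0 := by
    set M : ℝ := ∑ x, |c1 x| with hM
    have hM0 : 0 ≤ M := Finset.sum_nonneg fun x _ => abs_nonneg _
    set ε : ℝ := (1 + M)⁻¹ with hε
    have hε0 : 0 < ε := by positivity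
    have hbound : ∀ t : ℝ, |t| ≤ ε → ∀ x, 0 ≤ 1 - t * c1 x := by
      intro t ht x
      have h1 : |t * c1 x| ≤ ε * M := by
        rw [abs_mul]
        have h2 : |c1 x| ≤ M := Finset.single_le_sum (fun y _ => abs_nonneg (c1 y))
          (Finset.mem_univ x)
        exact mul_le_mul ht h2 (abs_nonneg _) (le_of_lt hε0)
      have h3 : ε * M < 1 := by
        rw [hε]
        rw [inv_mul_lt_iff₀ (by linarith)]
        linarith
      have := abs_le.mp (le_of_lt (lt_of_le_of_lt h1 h3))
      linarith [this.2]
    have hkey : ∀ t : ℝ, |t| ≤ ε → (∑ x, w x) - t * d ≤ ∑ x, w x := by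
      intro t ht
      have h1 := hopt (fun x => (((1 - t * c1 x : ℝ) : ℂ)) • E x)
        (perturb_psd E c1 t hE (hbound t ht)) (perturb_sum E c1 t hsum hc1sum)
      rw [perturb_obj ρ E c1 t] at h1
      exact h1
    have hp := hkey ε (by rw [abs_of_pos hε0])
    have hm := hkey (-ε) (by rw [abs_neg, abs_of_pos hε0])
    nlinarith
  -- pick the maximal positive coefficient
  set P : Finset X := Finset.univ.filter (fun x => 0 < c1 x) with hP
  have hPne : P.Nonempty := by
    obtain ⟨x, hx⟩ := hc1pos
    exact ⟨x, by simp [hP, hx]⟩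
  obtain ⟨x1, hx1P, hx1max⟩ := Finset.exists_max_image P c1 hPne
  have hx1pos : 0 < c1 x1 := by simpa [hP] using hx1P
  set t : ℝ := (c1 x1)⁻¹ with ht
  have ht0 : 0 < t := by positivity
  have hnn : ∀ x, 0 ≤ 1 - t * c1 x := by
    intro x
    by_cases hx : 0 < c1 x
    · have hle : c1 x ≤ c1 x1 := hx1max x (by simp [hP, hx])
      have : t * c1 x ≤ t * c1 x1 := by
        exact mul_le_mul_of_nonneg_left hle (le_of_lt ht0)
      rw [ht, inv_mul_cancel₀ (ne_of_gt hx1pos)] at this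
      linarith
    · push_neg at hx
      nlinarith
  refine ⟨fun x => (((1 - t * c1 x : ℝ) : ℂ)) • E x,
    perturb_psd E c1 t hE hnn, perturb_sum E c1 t hsum hc1sum, ?_, ?_⟩
  · rw [perturb_obj ρ E c1 t, ← hw]
    have : (∑ x, c1 x * w x) = d := rfl
    rw [this, hdzero, mul_zero, sub_zero]
  · have hsub : {x : X | (((1 - t * c1 x : ℝ) : ℂ)) • E x ≠ 0}
        ⊆ {x : X | E x ≠ 0} \ {x1} := by
      intro x hx
      simp only [Set.mem_setOf_eq] at hx
      constructor
      · intro hEx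
        exact hx (by rw [hEx, smul_zero])
      · intro hxx1
        rw [Set.mem_singleton_iff] at hxx1
        subst hxx1
        apply hx
        rw [ht, inv_mul_cancel₀ (ne_of_gt hx1pos)]
        norm_num
    have hx1S : x1 ∈ {x : X | E x ≠ 0} := hc1supp x1 (ne_of_gt hx1pos)
    calc {x : X | (((1 - t * c1 x : ℝ) : ℂ)) • E x ≠ 0}.ncard
        ≤ ({x : X | E x ≠ 0} \ {x1}).ncard :=
          Set.ncard_le_ncard hsub (Set.toFinite _)
      _ < {x : X | E x ≠ 0}.ncard :=
          Set.ncard_diff_singleton_lt_of_mem hx1S (Set.toFinite _)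


lemma reduce (ρ : X → Matrix (Fin n) (Fin n) ℂ) :
    ∀ (m : ℕ) (E : X → Matrix (Fin n) (Fin n) ℂ),
      (∀ x, (E x).PosSemidef) → (∑ x, E x) = 1 →
      (∀ F : X → Matrix (Fin n) (Fin n) ℂ, (∀ x, (F x).PosSemidef) → (∑ x, F x) = 1 →
        (∑ x, ((F x * ρ x).trace).re) ≤ ∑ x, ((E x * ρ x).trace).re) →
      {x : X | E x ≠ 0}.ncard ≤ m →
      ∃ E' : X → Matrix (Fin n) (Fin n) ℂ,
        (∀ x, (E' x).PosSemidef) ∧ (∑ x, E' x) = 1 ∧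
        (∑ x, ((E' x * ρ x).trace).re) = (∑ x, ((E x * ρ x).trace).re) ∧
        {x : X | E' x ≠ 0}.ncard ≤ n ^ 2 := by
  intro m
  induction m with
  | zero =>
    intro E h1 h2 _ hcard
    exact ⟨E, h1, h2, rfl, le_trans hcard (Nat.zero_le _)⟩
  | succ m ih =>
    intro E h1 h2 hopt hcard
    by_cases hle : {x : X | E x ≠ 0}.ncard ≤ n ^ 2
    · exact ⟨E, h1, h2, rfl, hle⟩
    · push_neg at hle
      obtain ⟨E'', p1, p2, p3, p4⟩ := reduce_step ρ E h1 h2 hopt hle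
      have hopt'' : ∀ F : X → Matrix (Fin n) (Fin n) ℂ,
          (∀ x, (F x).PosSemidef) → (∑ x, F x) = 1 →
          (∑ x, ((F x * ρ x).trace).re) ≤ ∑ x, ((E'' x * ρ x).trace).re := by
        intro F a b
        rw [p3]
        exact hopt F a b
      obtain ⟨E', q1, q2, q3, q4⟩ := ih E'' p1 p2 hopt'' (by omega)
      exact ⟨E', q1, q2, q3.trans p3, q4⟩

end QSD

/-- Optimal strategies with at most `n²` outcomes: every discrimination problem on ℂ^n
admits an optimal POVM `E` (attaining `P_guess`) such that `{x | E x ≠ 0}` has at most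
`n²` elements. -/
theorem qsd_exists_optimal_few_outcomes {n : ℕ} {X : Type*} [Fintype X] [Nonempty X]
    (ρ : X → Matrix (Fin n) (Fin n) ℂ)
    (hρ : ∀ x, (ρ x).PosSemidef)
    (hρtr : (∑ x, (ρ x).trace) = 1) :
    ∃ E : X → Matrix (Fin n) (Fin n) ℂ,
      (∀ x, (E x).PosSemidef) ∧ (∑ x, E x) = 1 ∧
      (∑ x, ((E x * ρ x).trace).re) =
        sSup {p : ℝ | ∃ F : X → Matrix (Fin n) (Fin n) ℂ,
          (∀ x, (F x).PosSemidef) ∧ (∑ x, F x) = 1 ∧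
          p = ∑ x, ((F x * ρ x).trace).re} ∧
      ({x : X | E x ≠ 0}.ncard ≤ n ^ 2) := by
  obtain ⟨E0, hE0psd, hE0sum, hE0opt⟩ := QSD.exists_max ρ
  obtain ⟨E, hpsd, hsum, hval, hcard⟩ :=
    QSD.reduce ρ ({x : X | E0 x ≠ 0}.ncard) E0 hE0psd hE0sum hE0opt le_rfl
  refine ⟨E, hpsd, hsum, ?_, hcard⟩
  have hgreat : IsGreatest {p : ℝ | ∃ F : X → Matrix (Fin n) (Fin n) ℂ,
      (∀ x, (F x).PosSemidef) ∧ (∑ x, F x) = 1 ∧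
      p = ∑ x, ((F x * ρ x).trace).re} (∑ x, ((E0 x * ρ x).trace).re) := by
    constructor
    · exact ⟨E0, hE0psd, hE0sum, rfl⟩
    · rintro p ⟨F, hF1, hF2, rfl⟩
      exact hE0opt F hF1 hF2
  rw [hgreat.csSup_eq]
  exact hval
end
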